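/- Let U_P(CC), U_P(CD), U_P(DC), U_P(DD), U_C(CC), U_C(CD), U_C(DC), U_C(DD), l1, l2 be real numbers with U_C(CC) − l2 > 0 and U_C(DD) − l2 > 0. Suppose φ > 0 and χ > 1 are real numbers such that the four feasibility inequalities hold: 0 ≤ φ·[U_P(CC) − l1 − χ·(U_C(CC) − l2)] + 1 ≤ 1; 0 ≤ φ·[U_P(CD) − l1 − χ·(U_C(CD) − l2)] + 1 ≤ 1; 0 ≤ φ·[U_P(DC) − l1 − χ·(U_C(DC) − l2)] ≤ 1; 0 ≤ φ·[U_P(DD) − l1 − χ·(U_C(DD) − l2)] ≤ 1. Then (U_P(CC) − l1)/(U_C(CC) − l2) ≤ χ ≤ (U_P(DD) − l1)/(U_C(DD) − l2); in particular (U_P(DD) − l1)/(U_C(DD) − l2) ≥ (U_P(CC) − l1)/(U_C(CC) − l2) and (U_P(DD) − l1)/(U_C(DD) − l2) > 1. (Theorem 4, case φ > 0.) -/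
import Mathlib


/-- Theorem 4, case `φ > 0`: the feasibility inequalities force
`(U_P(CC)-l1)/(U_C(CC)-l2) ≤ χ ≤ (U_P(DD)-l1)/(U_C(DD)-l2)`. -/
theorem extortion_feasibility_pos_phi
    (uPCC uPCD uPDC uPDD uCCC uCCD uCDC uCDD l1 l2 : ℝ)
    (hCC : 0 < uCCC - l2) (hDD : 0 < uCDD - l2)
    (φ χ : ℝ) (hφ : 0 < φ) (hχ : 1 < χ)
    (h1 : 0 ≤ φ * (uPCC - l1 - χ * (uCCC - l2)) + 1 ∧
          φ * (uPCC - l1 - χ * (uCCC - l2)) + 1 ≤ 1)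
    (h2 : 0 ≤ φ * (uPCD - l1 - χ * (uCCD - l2)) + 1 ∧
          φ * (uPCD - l1 - χ * (uCCD - l2)) + 1 ≤ 1)
    (h3 : 0 ≤ φ * (uPDC - l1 - χ * (uCDC - l2)) ∧
          φ * (uPDC - l1 - χ * (uCDC - l2)) ≤ 1)
    (h4 : 0 ≤ φ * (uPDD - l1 - χ * (uCDD - l2)) ∧
          φ * (uPDD - l1 - χ * (uCDD - l2)) ≤ 1) :
    ((uPCC - l1) / (uCCC - l2) ≤ χ ∧ χ ≤ (uPDD - l1) / (uCDD - l2)) ∧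
    (uPCC - l1) / (uCCC - l2) ≤ (uPDD - l1) / (uCDD - l2) ∧
    1 < (uPDD - l1) / (uCDD - l2) := by
  have e1 : uPCC - l1 - χ * (uCCC - l2) ≤ 0 := by
    nlinarith [h1.2]
  have e4 : 0 ≤ uPDD - l1 - χ * (uCDD - l2) := by
    nlinarith [h4.1]
  have hA : (uPCC - l1) / (uCCC - l2) ≤ χ := by
    rw [div_le_iff₀ hCC]; linarith
  have hB : χ ≤ (uPDD - l1) / (uCDD - l2) := by
    rw [le_div_iff₀ hDD]; linarith
  exact ⟨⟨hA, hB⟩, hA.trans hB, hχ.trans_le hB⟩
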